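/- With the partition construction of G and B: Σ_{S : S induces a forest of G, E_r ⊆ S, and |S ∩ E_ℓ| = n} det(B_S) = Σ_{S ∈ 𝒞} det(A_S). -/

import Mathlib

open scoped Classical

/-- The principal minor of `A` on the index set `S` (equal to `1` when `S = ∅`). -/
noncomputable def principalMinor {ι : Type*} [DecidableEq ι]
    (A : Matrix ι ι ℝ) (S : Finset ι) : ℝ :=
  (A.submatrix (fun i : ↥S => (i : ι)) (fun i : ↥S => (i : ι))).det

/-- The edge of the graph `G` associated with an edge index in `Fin m ⊕ Fin m`:
the left edge `{v_{g j}, w_{g j, j}}` and the right edge `{w_{g j, j}, v_{g j + 1}}`. -/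
def partEdge {n m : ℕ} (g : Fin m → Fin n) : (Fin m ⊕ Fin m) → Sym2 (Fin (n + 1) ⊕ Fin m)
  | Sum.inl j => s(Sum.inl (g j).castSucc, Sum.inr j)
  | Sum.inr j => s(Sum.inr j, Sum.inl (g j).succ)

/-- The spanning subgraph of `G` whose edges are those indexed by `S ⊆ Fin m ⊕ Fin m`. -/
def partSubgraph {n m : ℕ} (g : Fin m → Fin n) (S : Finset (Fin m ⊕ Fin m)) :
    SimpleGraph (Fin (n + 1) ⊕ Fin m) :=
  SimpleGraph.fromEdgeSet (partEdge g '' ↑S)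

/-- The matrix `B` of the construction: the left-left block is `A`, the right-right block is
the identity, and the off-diagonal blocks vanish. -/
def matB {m : ℕ} (A : Matrix (Fin m) (Fin m) ℝ) :
    Matrix (Fin m ⊕ Fin m) (Fin m ⊕ Fin m) ℝ :=
  Matrix.of fun p q =>
    match p, q with
    | Sum.inl j₁, Sum.inl j₂ => A j₁ j₂
    | Sum.inr j, Sum.inr j' => if j = j' then 1 else 0
    | _, _ => 0

/-- The set `E_ℓ` of left edge indices. -/
def leftIdx (m : ℕ) : Finset (Fin m ⊕ Fin m) := Finset.univ.image Sum.inl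

/-- The set `E_r` of right edge indices. -/
def rightIdx (m : ℕ) : Finset (Fin m ⊕ Fin m) := Finset.univ.image Sum.inr

namespace PartAux

open SimpleGraph

/-- The first edge of a non-nil walk. -/
lemma edge_fst_getVert_one {V : Type*} {G : SimpleGraph V} {u v : V}
    (w : G.Walk u v) (hw : ¬ w.Nil) : s(u, w.getVert 1) ∈ w.edges := by
  cases w with
  | nil => simp at hw
  | cons h p => simp [Walk.getVert_cons_succ]

/-- A graph in which every edge changes a potential `f`, and every vertex has at most one
neighbour of larger potential, is acyclic. -/
lemma acyclic_of_up {V : Type*} (G : SimpleGraph V) (f : V → ℕ)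
    (hne : ∀ a b, G.Adj a b → f a ≠ f b)
    (hup : ∀ a b c, G.Adj a b → G.Adj a c → f a < f b → f a < f c → b = c) :
    G.IsAcyclic := by
  have aux : ∀ (u : V) (q : G.Walk u u), q.IsCycle → (∀ z ∈ q.support, f u ≤ f z) → False := by
    intro u q hq hmin
    have h3 := hq.three_le_length
    cases q with
    | nil => simp at h3
    | cons h p =>
      rename_i x
      rw [Walk.cons_isCycle_iff] at hq
      have hpnil : ¬ p.Nil := by
        rw [Walk.nil_iff_length_eq]
        simp only [Walk.length_cons] at h3
        omega
      have hrnil : ¬ p.reverse.Nil := by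
        rw [Walk.nil_iff_length_eq] at hpnil ⊢
        simpa using hpnil
      set y := p.reverse.getVert 1 with hy
      have hadjy : G.Adj u y := p.reverse.adj_snd hrnil
      have hy_edge : s(u, y) ∈ p.edges := by
        have := edge_fst_getVert_one p.reverse hrnil
        rwa [Walk.edges_reverse, List.mem_reverse] at this
      have hxmem : x ∈ p.support := p.start_mem_support
      have hymem : y ∈ p.support := by
        have : y ∈ p.reverse.support := by
          rw [Walk.mem_support_iff_exists_getVert]
          refine ⟨1, rfl, ?_⟩
          rw [Walk.nil_iff_length_eq] at hrnil
          omega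
        rwa [Walk.support_reverse, List.mem_reverse] at this
      have hfx : f u < f x := by
        have := hmin x (by simp [hxmem])
        exact lt_of_le_of_ne this (hne u x h)
      have hfy : f u < f y := by
        have := hmin y (by simp [hymem])
        exact lt_of_le_of_ne this (hne u y hadjy)
      have : x = y := hup u x y h hadjy hfx hfy
      rw [← this] at hy_edge
      exact hq.2 hy_edge
  intro v p hp
  obtain ⟨u, hu, hmin⟩ := (p.support.toFinset).exists_min_image f ⟨v, by simp⟩
  rw [List.mem_toFinset] at hu
  refine aux u (p.rotate u hu) (hp.rotate hu) ?_
  intro z hz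
  have hz' : z ∈ p.support := by
    rcases List.eq_or_mem_of_mem_cons ((p.rotate u hu).support_eq_cons ▸ hz) with h | h
    · exact h ▸ hu
    · have := (Walk.support_rotate p u hu).mem_iff.mp h
      exact List.mem_of_mem_tail this
  exact hmin z (List.mem_toFinset.2 hz')

variable {n m : ℕ} (g : Fin m → Fin n)

lemma partSubgraph_adj {S : Finset (Fin m ⊕ Fin m)} {a b : Fin (n + 1) ⊕ Fin m} :
    (partSubgraph g S).Adj a b ↔ (∃ x ∈ S, partEdge g x = s(a, b)) ∧ a ≠ b := by
  simp [partSubgraph, SimpleGraph.fromEdgeSet_adj, Set.mem_image, eq_comm]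

/-- The potential on vertices. -/
def pot : (Fin (n + 1) ⊕ Fin m) → ℕ :=
  Sum.elim (fun i => 2 * i.val) (fun j => 2 * (g j).val + 1)

lemma not_acyclic_of_two {S : Finset (Fin m ⊕ Fin m)} {j j' : Fin m}
    (hj : Sum.inl j ∈ S) (hj' : Sum.inl j' ∈ S)
    (hrj : Sum.inr j ∈ S) (hrj' : Sum.inr j' ∈ S)
    (hjj : j ≠ j') (hgg : g j = g j') : ¬ (partSubgraph g S).IsAcyclic := by
  intro hac
  have h1 : (partSubgraph g S).Adj (Sum.inl (g j).castSucc) (Sum.inr j) := by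
    rw [partSubgraph_adj]
    exact ⟨⟨Sum.inl j, hj, rfl⟩, by simp⟩
  have h2 : (partSubgraph g S).Adj (Sum.inr j) (Sum.inl (g j).succ) := by
    rw [partSubgraph_adj]
    exact ⟨⟨Sum.inr j, hrj, rfl⟩, by simp⟩
  have h3 : (partSubgraph g S).Adj (Sum.inl (g j).succ) (Sum.inr j') := by
    rw [partSubgraph_adj]
    refine ⟨⟨Sum.inr j', hrj', ?_⟩, by simp⟩
    show s(Sum.inr j', Sum.inl (g j').succ) = _
    rw [hgg, Sym2.eq_swap]
  have h4 : (partSubgraph g S).Adj (Sum.inr j') (Sum.inl (g j).castSucc) := by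
    rw [partSubgraph_adj]
    refine ⟨⟨Sum.inl j', hj', ?_⟩, by simp⟩
    show s(Sum.inl (g j').castSucc, Sum.inr j') = _
    rw [hgg, Sym2.eq_swap]
  have hcs : (g j).castSucc ≠ (g j).succ := (Fin.castSucc_lt_succ (i := g j)).ne
  refine hac (Walk.cons h1 (Walk.cons h2 (Walk.cons h3 (Walk.cons h4 Walk.nil)))) ?_
  rw [Walk.isCycle_def]
  refine ⟨?_, by simp, ?_⟩
  · rw [Walk.isTrail_def]
    simp [hjj, hjj.symm, hcs, hcs.symm, Sym2.eq_iff]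
  · simp [hjj, hjj.symm, hcs, hcs.symm]

lemma mem_union_inl {T : Finset (Fin m)} {j : Fin m} :
    Sum.inl j ∈ rightIdx m ∪ T.image Sum.inl ↔ j ∈ T := by
  simp [rightIdx]

lemma mem_union_inr {T : Finset (Fin m)} {j : Fin m} :
    Sum.inr j ∈ rightIdx m ∪ T.image Sum.inl := by
  simp [rightIdx]

/-- Characterisation of upward edges in the partition subgraph. -/
lemma up_nbr {S : Finset (Fin m ⊕ Fin m)} {a b : Fin (n + 1) ⊕ Fin m}
    (hab : (partSubgraph g S).Adj a b) (hf : pot g a < pot g b) :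
    (∃ j, Sum.inl j ∈ S ∧ a = Sum.inl (g j).castSucc ∧ b = Sum.inr j) ∨
      (∃ j, a = Sum.inr j ∧ b = Sum.inl (g j).succ) := by
  rw [partSubgraph_adj] at hab
  obtain ⟨⟨x, hxS, hx⟩, -⟩ := hab
  cases x with
  | inl j =>
    rw [partEdge, Sym2.eq_iff] at hx
    rcases hx with ⟨ha, hb⟩ | ⟨ha, hb⟩
    · exact Or.inl ⟨j, hxS, ha.symm, hb.symm⟩
    · exfalso
      rw [← ha, ← hb] at hf
      simp only [pot, Sum.elim_inl, Sum.elim_inr, Fin.coe_castSucc, Fin.val_succ] at hf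
      omega
  | inr j =>
    rw [partEdge, Sym2.eq_iff] at hx
    rcases hx with ⟨ha, hb⟩ | ⟨ha, hb⟩
    · exact Or.inr ⟨j, ha.symm, hb.symm⟩
    · exfalso
      rw [← ha, ← hb] at hf
      simp only [pot, Sum.elim_inl, Sum.elim_inr, Fin.coe_castSucc, Fin.val_succ] at hf
      omega

lemma pot_ne_of_adj {S : Finset (Fin m ⊕ Fin m)} {a b : Fin (n + 1) ⊕ Fin m}
    (hab : (partSubgraph g S).Adj a b) : pot g a ≠ pot g b := by
  rw [partSubgraph_adj] at hab
  obtain ⟨⟨x, hxS, hx⟩, -⟩ := hab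
  cases x with
  | inl j =>
    rw [partEdge, Sym2.eq_iff] at hx
    rcases hx with ⟨ha, hb⟩ | ⟨ha, hb⟩ <;>
      · rw [← ha, ← hb]
        simp only [pot, Sum.elim_inl, Sum.elim_inr, Fin.coe_castSucc, Fin.val_succ]
        omega
  | inr j =>
    rw [partEdge, Sym2.eq_iff] at hx
    rcases hx with ⟨ha, hb⟩ | ⟨ha, hb⟩ <;>
      · rw [← ha, ← hb]
        simp only [pot, Sum.elim_inl, Sum.elim_inr, Fin.coe_castSucc, Fin.val_succ]
        omega

lemma acyclic_transversal {T : Finset (Fin m)}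
    (hT : ∀ i : Fin n, ∃! j : Fin m, j ∈ T ∧ g j = i) :
    (partSubgraph g (rightIdx m ∪ T.image Sum.inl)).IsAcyclic := by
  apply acyclic_of_up _ (pot g)
  · exact fun a b hab => pot_ne_of_adj g hab
  · intro a b c hb hc hfb hfc
    rcases up_nbr g hb hfb with ⟨j₁, hj₁S, ha₁, hb₁⟩ | ⟨j₁, ha₁, hb₁⟩ <;>
      rcases up_nbr g hc hfc with ⟨j₂, hj₂S, ha₂, hc₂⟩ | ⟨j₂, ha₂, hc₂⟩
    · rw [mem_union_inl] at hj₁S hj₂S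
      rw [ha₁] at ha₂
      have hgg : g j₁ = g j₂ := by
        have := Sum.inl.inj ha₂
        exact Fin.castSucc_injective _ this
      obtain ⟨j₀, -, huniq⟩ := hT (g j₁)
      have e1 : j₁ = j₀ := huniq j₁ ⟨hj₁S, rfl⟩
      have e2 : j₂ = j₀ := huniq j₂ ⟨hj₂S, hgg.symm⟩
      rw [hb₁, hc₂, e1, e2]
    · rw [ha₁] at ha₂; exact absurd ha₂ (by simp)
    · rw [ha₁] at ha₂; exact absurd ha₂ (by simp)
    · rw [ha₁] at ha₂
      have := Sum.inr.inj ha₂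
      rw [hb₁, hc₂, this]

lemma transversal_card {T : Finset (Fin m)}
    (hT : ∀ i : Fin n, ∃! j : Fin m, j ∈ T ∧ g j = i) : T.card = n := by
  have hfib : ∀ i : Fin n, (T.filter (fun j => g j = i)).card = 1 := by
    intro i
    obtain ⟨j₀, ⟨hj₀T, hj₀g⟩, huniq⟩ := hT i
    rw [Finset.card_eq_one]
    refine ⟨j₀, ?_⟩
    ext j
    simp only [Finset.mem_filter, Finset.mem_singleton]
    constructor
    · rintro ⟨h1, h2⟩; exact huniq j ⟨h1, h2⟩
    · rintro rfl; exact ⟨hj₀T, hj₀g⟩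
  rw [Finset.card_eq_sum_card_fiberwise (f := g) (t := Finset.univ) (fun x _ => Finset.mem_univ _)]
  simp [hfib]

lemma inter_leftIdx (T : Finset (Fin m)) :
    (rightIdx m ∪ T.image Sum.inl) ∩ leftIdx m = T.image Sum.inl := by
  ext x
  cases x <;> simp [leftIdx, rightIdx]

lemma reconstruct {S : Finset (Fin m ⊕ Fin m)} (hr : rightIdx m ⊆ S) :
    rightIdx m ∪ (Finset.univ.filter (fun j => Sum.inl j ∈ S)).image Sum.inl = S := by
  ext x
  cases x with
  | inl j => simp [rightIdx]
  | inr j =>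
    simp only [Finset.mem_union, Finset.mem_image]
    constructor
    · rintro (h | ⟨j', hj', h⟩)
      · exact hr h
      · simp at h
    · intro _
      exact Or.inl (by simp [rightIdx])

lemma filter_inl_card {S : Finset (Fin m ⊕ Fin m)} :
    (S ∩ leftIdx m).card = (Finset.univ.filter (fun j => Sum.inl j ∈ S)).card := by
  have : S ∩ leftIdx m = (Finset.univ.filter (fun j => Sum.inl j ∈ S)).image Sum.inl := by
    ext x
    cases x <;> simp [leftIdx]
  rw [this, Finset.card_image_of_injective _ Sum.inl_injective]

lemma forward_transversal {S : Finset (Fin m ⊕ Fin m)}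
    (hac : (partSubgraph g S).IsAcyclic) (hr : rightIdx m ⊆ S)
    (hcard : (S ∩ leftIdx m).card = n) :
    ∀ i : Fin n, ∃! j : Fin m, j ∈ Finset.univ.filter (fun j => Sum.inl j ∈ S) ∧ g j = i := by
  set T := Finset.univ.filter (fun j => Sum.inl j ∈ S) with hTdef
  have hmemT : ∀ j, j ∈ T ↔ Sum.inl j ∈ S := by intro j; simp [hTdef]
  have hinj : ∀ j j', j ∈ T → j' ∈ T → g j = g j' → j = j' := by
    intro j j' hj hj' hgg
    by_contra hjj
    exact not_acyclic_of_two g ((hmemT j).1 hj) ((hmemT j').1 hj')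
      (hr (by simp [rightIdx])) (hr (by simp [rightIdx])) hjj hgg hac
  have hcardT : T.card = n := by rw [← filter_inl_card, hcard]
  have hle : ∀ i : Fin n, i ∈ Finset.univ → (T.filter (fun j => g j = i)).card ≤ 1 := by
    intro i _
    rw [Finset.card_le_one]
    intro a ha b hb
    rw [Finset.mem_filter] at ha hb
    exact hinj a b ha.1 hb.1 (ha.2.trans hb.2.symm)
  have hsum : ∑ i : Fin n, (T.filter (fun j => g j = i)).card = ∑ _i : Fin n, 1 := by
    rw [← Finset.card_eq_sum_card_fiberwise (f := g) (t := Finset.univ)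
      (fun x _ => Finset.mem_univ _), hcardT]
    simp
  have hfib := (Finset.sum_eq_sum_iff_of_le hle).1 hsum
  intro i
  have h1 : (T.filter (fun j => g j = i)).card = 1 := hfib i (Finset.mem_univ i)
  obtain ⟨j₀, hj₀⟩ := Finset.card_eq_one.1 h1
  have hj₀mem : j₀ ∈ T.filter (fun j => g j = i) := hj₀ ▸ Finset.mem_singleton_self j₀
  rw [Finset.mem_filter] at hj₀mem
  refine ⟨j₀, hj₀mem, ?_⟩
  intro j hj
  have : j ∈ T.filter (fun j => g j = i) := Finset.mem_filter.2 hj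
  rw [hj₀] at this
  exact Finset.mem_singleton.1 this

lemma det_block (A : Matrix (Fin m) (Fin m) ℝ) (T : Finset (Fin m)) :
    principalMinor (matB A) (rightIdx m ∪ T.image Sum.inl) = principalMinor A T := by
  set S : Finset (Fin m ⊕ Fin m) := rightIdx m ∪ T.image Sum.inl with hS
  have hinlS : ∀ t : ↥T, Sum.inl (t : Fin m) ∈ S := fun t => (mem_union_inl (m := m)).2 t.2
  have hinrS : ∀ j : Fin m, Sum.inr j ∈ S := fun j => mem_union_inr (m := m)
  let f : (↥T ⊕ Fin m) → ↥S :=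
    Sum.elim (fun t => ⟨Sum.inl (t : Fin m), hinlS t⟩) (fun j => ⟨Sum.inr j, hinrS j⟩)
  have hbij : Function.Bijective f := by
    constructor
    · intro x y hxy
      cases x with
      | inl a =>
        cases y with
        | inl b =>
          simp only [f, Sum.elim_inl, Subtype.mk.injEq, Sum.inl.injEq] at hxy
          exact congrArg Sum.inl (Subtype.ext hxy)
        | inr b => simp [f] at hxy
      | inr a =>
        cases y with
        | inl b => simp [f] at hxy
        | inr b =>
          simp only [f, Sum.elim_inr, Subtype.mk.injEq, Sum.inr.injEq] at hxy
          exact congrArg Sum.inr hxy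
    · rintro ⟨x, hx⟩
      cases x with
      | inl j =>
        have hjT : j ∈ T := (mem_union_inl (m := m)).1 hx
        exact ⟨Sum.inl ⟨j, hjT⟩, rfl⟩
      | inr j => exact ⟨Sum.inr j, rfl⟩
  let e : (↥T ⊕ Fin m) ≃ ↥S := Equiv.ofBijective f hbij
  have key : principalMinor (matB A) S =
      (((matB A).submatrix (fun i : ↥S => (i : Fin m ⊕ Fin m))
        (fun i : ↥S => (i : Fin m ⊕ Fin m))).submatrix e e).det := by
    rw [Matrix.det_submatrix_equiv_self]
    rfl
  rw [key]
  have hmat : ((matB A).submatrix (fun i : ↥S => (i : Fin m ⊕ Fin m))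
        (fun i : ↥S => (i : Fin m ⊕ Fin m))).submatrix e e =
      Matrix.fromBlocks
        (A.submatrix (fun i : ↥T => (i : Fin m)) (fun i : ↥T => (i : Fin m)))
        0 0 (1 : Matrix (Fin m) (Fin m) ℝ) := by
    ext p q
    cases p <;> cases q <;>
      simp [e, f, Equiv.ofBijective, matB, Matrix.one_apply]
  rw [hmat, Matrix.det_fromBlocks_zero₂₁, Matrix.det_one, mul_one]
  rfl

end PartAux

/-- For the partition construction: the sum of `det (B_S)` over all `S` inducing a forest of
`G`, containing `E_r`, and with `|S ∩ E_ℓ| = n`, equals the sum of `det (A_T)` over all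
`T ∈ 𝒞`, the subsets of `Fin m` meeting every fiber `P_i = g⁻¹(i)` in exactly one element. -/
theorem part_sum_forests_eq_sum_transversals {n m : ℕ} (hn : 1 ≤ n) (hm : 1 ≤ m)
    (g : Fin m → Fin n) (hg : Function.Surjective g)
    (A : Matrix (Fin m) (Fin m) ℝ) (hA : A.PosSemidef) :
    ∑ S ∈ Finset.univ.filter (fun S : Finset (Fin m ⊕ Fin m) =>
        (partSubgraph g S).IsAcyclic ∧ rightIdx m ⊆ S ∧ (S ∩ leftIdx m).card = n),
      principalMinor (matB A) S
    = ∑ T ∈ Finset.univ.filter (fun T : Finset (Fin m) =>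
        ∀ i : Fin n, ∃! j : Fin m, j ∈ T ∧ g j = i),
      principalMinor A T := by
  refine Finset.sum_nbij' (fun S => Finset.univ.filter (fun j => Sum.inl j ∈ S))
    (fun T => rightIdx m ∪ T.image Sum.inl) ?_ ?_ ?_ ?_ ?_
  · intro S hS
    rw [Finset.mem_filter] at hS ⊢
    obtain ⟨-, hac, hr, hcard⟩ := hS
    exact ⟨Finset.mem_univ _, fun i => by
      have := PartAux.forward_transversal g hac hr hcard i
      simpa using this⟩
  · intro T hT
    rw [Finset.mem_filter] at hT ⊢
    obtain ⟨-, hT⟩ := hT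
    refine ⟨Finset.mem_univ _, PartAux.acyclic_transversal g hT, Finset.subset_union_left, ?_⟩
    rw [PartAux.inter_leftIdx, Finset.card_image_of_injective _ Sum.inl_injective]
    exact PartAux.transversal_card g hT
  · intro S hS
    rw [Finset.mem_filter] at hS
    exact PartAux.reconstruct hS.2.2.1
  · intro T hT
    ext j
    simp [rightIdx]
  · intro S hS
    rw [Finset.mem_filter] at hS
    conv_lhs => rw [← PartAux.reconstruct hS.2.2.1]
    exact PartAux.det_block A _
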